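/- Let f : X → Y be a continuous map between compact metrizable spaces. Suppose that for any pair of disjoint closed subsets B, C of X there exists a closed subset T of X with dim T ≤ k−1 such that for every y ∈ Y the set T separates the fiber f⁻¹(y) between B and C (i.e., f⁻¹(y) \ T is a disjoint union of two relatively open sets, one containing f⁻¹(y) ∩ B and the other f⁻¹(y) ∩ C). Then there exists a σ-compact subset A ⊆ X with dim A ≤ k−1 such that every fiber of the restriction f|_{X∖A} has covering dimension at most 0. -/

import Mathlib

open Set Topology

noncomputable section

namespace Paper

/-- Order of a family of sets at most `k`: no point belongs to more than `k` members. -/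
def OrderLE {X : Type*} (c : Set (Set X)) (k : ℕ) : Prop :=
  ∀ x : X, {u ∈ c | x ∈ u}.Finite ∧ {u ∈ c | x ∈ u}.ncard ≤ k

/-- Covering dimension at most `n` (with `n : ℤ` so that `n = -1` means empty):
every open cover admits an open refinement, still covering, of order at most `n + 1`. -/
def CovDimLE (X : Type*) [TopologicalSpace X] (n : ℤ) : Prop :=
  ∀ c : Set (Set X), (∀ u ∈ c, IsOpen u) → ⋃₀ c = univ →
    ∃ d : Set (Set X), (∀ v ∈ d, IsOpen v) ∧ ⋃₀ d = univ ∧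
      (∀ v ∈ d, ∃ u ∈ c, v ⊆ u) ∧ OrderLE d (n + 1).toNat

/-- Covering dimension of a subset, via the subspace topology. -/
def DimLE {X : Type*} [TopologicalSpace X] (A : Set X) (n : ℤ) : Prop :=
  CovDimLE A n

/-- `T` separates `Z` between `B` and `C`: the complement `Z \ T` splits into two
disjoint relatively open pieces, one containing `Z ∩ B` and the other `Z ∩ C`. -/
def Separates {X : Type*} [TopologicalSpace X] (Z T B C : Set X) : Prop :=
  ∃ U V : Set X, IsOpen U ∧ IsOpen V ∧ Z \ T ⊆ U ∪ V ∧
    Disjoint (U ∩ (Z \ T)) (V ∩ (Z \ T)) ∧ Z ∩ B ⊆ U ∩ (Z \ T) ∧ Z ∩ C ⊆ V ∩ (Z \ T)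

/-- `A` is σ-compact: a countable union of compact sets. -/
def IsSigmaCompact' {X : Type*} [TopologicalSpace X] (A : Set X) : Prop :=
  ∃ K : ℕ → Set X, (∀ n, IsCompact (K n)) ∧ A = ⋃ n, K n

/-- A C-space (property C). -/
def CSpace (X : Type*) [TopologicalSpace X] : Prop :=
  ∀ α : ℕ → Set (Set X), (∀ n, (∀ u ∈ α n, IsOpen u) ∧ ⋃₀ α n = univ) →
    ∃ μ : ℕ → Set (Set X),
      (∀ n, (∀ u ∈ μ n, IsOpen u) ∧ (μ n).PairwiseDisjoint id ∧
        ∀ u ∈ μ n, ∃ v ∈ α n, u ⊆ v) ∧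
      ⋃₀ (⋃ n, μ n) = univ

/-- A family of sets is discrete in `X`: every point has a neighborhood
meeting at most one member of the family. -/
def DiscreteFamily {X : Type*} [TopologicalSpace X] (E : ℕ → Set X) : Prop :=
  ∀ x : X, ∃ W ∈ 𝓝 x, {p : ℕ | (W ∩ E p).Nonempty}.Subsingleton

/-- `E` admits a cover by open subsets of `X` of order ≤ `k` and mesh ≤ `ε`. -/
def AdmitsSmallCover {X : Type*} [MetricSpace X] (E : Set X) (k : ℕ) (ε : ℝ) : Prop :=
  ∃ c : Set (Set X), (∀ u ∈ c, IsOpen u) ∧ E ⊆ ⋃₀ c ∧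
    (∀ u ∈ c, Metric.diam u ≤ ε) ∧ OrderLE c k

/-- The unit cube `[0,1]^k`. -/
abbrev Cube (k : ℕ) : Type := Fin k → Set.Icc (0 : ℝ) 1

/-- A simplicial map between (geometric) simplicial complexes: it sends the vertex set
of each face onto the vertex set of a face and is affine on each closed simplex. -/
def IsSimplicialMap {E F : Type*} [AddCommGroup E] [Module ℝ E] [AddCommGroup F] [Module ℝ F]
    (K : Geometry.SimplicialComplex ℝ E) (L : Geometry.SimplicialComplex ℝ F)
    (p : E → F) : Prop :=
  ∀ s ∈ K.faces, (∃ t ∈ L.faces, p '' (s : Set E) = (t : Set F)) ∧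
    ∃ g : E →ᵃ[ℝ] F, ∀ x ∈ convexHull ℝ (s : Set E), p x = g x

/-- An `ω`-map relative to a subset `S` of the target: a continuous map such that the
preimage of some open cover of `S` refines `ω`. -/
def IsOmegaMapOn {X P : Type*} [TopologicalSpace X] [TopologicalSpace P]
    (κ : X → P) (S : Set P) (ω : Set (Set X)) : Prop :=
  Continuous κ ∧ ∃ c : Set (Set P), (∀ u ∈ c, IsOpen u) ∧ S ⊆ ⋃₀ c ∧
    ∀ u ∈ c, ∃ w ∈ ω, κ ⁻¹' u ⊆ w

/-- `f` admits approximation by `k`-dimensional simplicial maps. -/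
def AdmitsApprox {X Y : Type*} [TopologicalSpace X] [TopologicalSpace Y]
    (f : X → Y) (k : ℕ) : Prop :=
  ∀ ωX : Set (Set X), (∀ u ∈ ωX, IsOpen u) → ⋃₀ ωX = univ →
  ∀ ωY : Set (Set Y), (∀ u ∈ ωY, IsOpen u) → ⋃₀ ωY = univ →
    ∃ (n m : ℕ) (K : Geometry.SimplicialComplex ℝ (Fin n → ℝ))
      (L : Geometry.SimplicialComplex ℝ (Fin m → ℝ))
      (κX : X → (Fin n → ℝ)) (κY : Y → (Fin m → ℝ)) (p : (Fin n → ℝ) → (Fin m → ℝ)),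
      range κX ⊆ K.space ∧ range κY ⊆ L.space ∧
      IsOmegaMapOn κX K.space ωX ∧ IsOmegaMapOn κY L.space ωY ∧
      IsSimplicialMap K L p ∧ (∀ x, p (κX x) = κY (f x)) ∧
      ∀ z : Fin m → ℝ, DimLE {x | x ∈ K.space ∧ p x = z} (k : ℤ)

/-- The open star of a vertex `a` in a simplicial complex `K`: the points of `|K|`
not lying in any closed simplex missing `a`. -/
def openStar {E : Type*} [AddCommGroup E] [Module ℝ E]
    (K : Geometry.SimplicialComplex ℝ E) (a : E) : Set E :=
  K.space \ ⋃ s ∈ {s ∈ K.faces | a ∉ s}, convexHull ℝ (s : Set E)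

end Paper
open Paper ENNReal
lemma covDimLE_of_isEmpty {Z : Type*} [TopologicalSpace Z] [IsEmpty Z] (n : ℤ) :
    CovDimLE Z n := by
  intro c _ _
  refine ⟨∅, by simp, ?_, by simp, fun x => isEmptyElim x⟩
  have : (univ : Set Z) = ∅ := by simp [Set.eq_empty_of_isEmpty]
  simp [this]

lemma covDimLE_congr {Z W : Type*} [TopologicalSpace Z] [TopologicalSpace W]
    (e : Z ≃ₜ W) {n : ℤ} (h : CovDimLE Z n) : CovDimLE W n := by
  intro c hc hcov
  obtain ⟨d, hd1, hd2, hd3, hd4⟩ := h ((fun u => e ⁻¹' u) '' c)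
    (by rintro u ⟨u', hu', rfl⟩; exact (hc u' hu').preimage e.continuous)
    (by
      apply eq_univ_of_forall; intro z
      have : e z ∈ ⋃₀ c := hcov ▸ mem_univ _
      obtain ⟨u, hu, hzu⟩ := this
      exact ⟨e ⁻¹' u, ⟨u, hu, rfl⟩, hzu⟩)
  refine ⟨(fun v => e.symm ⁻¹' v) '' d, ?_, ?_, ?_, ?_⟩
  · rintro v ⟨v', hv', rfl⟩; exact (hd1 v' hv').preimage e.symm.continuous
  · apply eq_univ_of_forall; intro w
    have : e.symm w ∈ ⋃₀ d := hd2 ▸ mem_univ _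
    obtain ⟨v, hv, hwv⟩ := this
    exact ⟨e.symm ⁻¹' v, ⟨v, hv, rfl⟩, hwv⟩
  · rintro v ⟨v', hv', rfl⟩
    obtain ⟨u, ⟨u', hu', rfl⟩, hsub⟩ := hd3 v' hv'
    refine ⟨u', hu', ?_⟩
    intro x hx
    have : e.symm x ∈ e ⁻¹' u' := hsub hx
    simpa using this
  · intro w
    have key : {v ∈ (fun v => e.symm ⁻¹' v) '' d | w ∈ v} =
        (fun v => e.symm ⁻¹' v) '' {v ∈ d | e.symm w ∈ v} := by
      ext v
      constructor
      · rintro ⟨⟨v', hv', rfl⟩, hw⟩; exact ⟨v', ⟨hv', hw⟩, rfl⟩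
      · rintro ⟨v', ⟨hv', hw⟩, rfl⟩; exact ⟨⟨v', hv', rfl⟩, hw⟩
    rw [key]
    obtain ⟨hfin, hcard⟩ := hd4 (e.symm w)
    exact ⟨hfin.image _, le_trans (Set.ncard_image_le hfin) hcard⟩

def subsubHomeo {X : Type*} [TopologicalSpace X] {A T : Set X} (h : T ⊆ A) :
    (Subtype.val ⁻¹' T : Set A) ≃ₜ T where
  toFun x := ⟨x.1.1, x.2⟩
  invFun y := ⟨⟨y.1, h y.2⟩, y.2⟩
  left_inv x := rfl
  right_inv y := rfl
  continuous_toFun :=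
    Continuous.subtype_mk (continuous_subtype_val.comp continuous_subtype_val) _
  continuous_invFun :=
    Continuous.subtype_mk (Continuous.subtype_mk continuous_subtype_val _) _

lemma finite_ncard_le_of_forall_finset {ι : Type*} {S : Set ι} {m : ℕ}
    (h : ∀ σ : Finset ι, ↑σ ⊆ S → σ.card ≤ m) : S.Finite ∧ S.ncard ≤ m := by
  have hfin : S.Finite := by
    by_contra hinf
    have hinf' : S.Infinite := hinf
    obtain ⟨t, ht, hcard⟩ := hinf'.exists_subset_card_eq (m + 1)
    have := h t ht
    omega
  refine ⟨hfin, ?_⟩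
  rw [Set.ncard_eq_toFinset_card S hfin]
  exact h hfin.toFinset (by simp)

lemma nat_rec_choice {α : Type*} (Inv : ℕ → α → Prop) (Rel : ℕ → α → α → Prop)
    (a0 : α) (h0 : Inv 0 a0) (hstep : ∀ i a, Inv i a → ∃ b, Inv (i + 1) b ∧ Rel i a b) :
    ∃ g : ℕ → α, g 0 = a0 ∧ (∀ i, Inv i (g i)) ∧ ∀ i, Rel i (g i) (g (i + 1)) := by
  classical
  let g' : (i : ℕ) → {a : α // Inv i a} :=
    fun i => Nat.rec ⟨a0, h0⟩
      (fun i p => ⟨(hstep i p.1 p.2).choose, (hstep i p.1 p.2).choose_spec.1⟩) i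
  refine ⟨fun i => (g' i).1, rfl, fun i => (g' i).2, fun i => ?_⟩
  exact (hstep i (g' i).1 (g' i).2).choose_spec.2

lemma covDimLE_zero_of_clopen_basis {Z : Type*} [TopologicalSpace Z]
    [SecondCountableTopology Z]
    (hcl : ∀ z : Z, ∀ O : Set Z, IsOpen O → z ∈ O →
      ∃ E : Set Z, IsClopen E ∧ z ∈ E ∧ E ⊆ O) :
    CovDimLE Z 0 := by
  rcases isEmpty_or_nonempty Z with hZ | hZ
  · exact covDimLE_of_isEmpty 0
  intro c hc hcov
  classical
  set Fam : Set (Set Z) := {E | IsClopen E ∧ ∃ u ∈ c, E ⊆ u} with hFam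
  have hFamOpen : ∀ E ∈ Fam, IsOpen E := fun E hE => hE.1.2
  have hFamCov : ⋃₀ Fam = univ := by
    apply eq_univ_of_forall; intro z
    have : z ∈ ⋃₀ c := hcov ▸ mem_univ z
    obtain ⟨u, hu, hzu⟩ := this
    obtain ⟨E, hE1, hE2, hE3⟩ := hcl z u (hc u hu) hzu
    exact ⟨E, ⟨hE1, u, hu, hE3⟩, hE2⟩
  obtain ⟨T, hTc, hTsub, hTcov⟩ := TopologicalSpace.isOpen_sUnion_countable Fam hFamOpen
  rw [hFamCov] at hTcov
  have hTne : T.Nonempty := by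
    rcases hZ with ⟨z⟩
    have : z ∈ ⋃₀ T := hTcov ▸ mem_univ z
    obtain ⟨E, hE, _⟩ := this
    exact ⟨E, hE⟩
  obtain ⟨g, hg⟩ := hTc.exists_eq_range hTne
  have hgFam : ∀ n, g n ∈ Fam := fun n => hTsub (hg ▸ mem_range_self n)
  set h : ℕ → Set Z := fun n => g n \ ⋃ m ∈ Finset.range n, g m with hh
  have hclosed : ∀ n, IsClosed (⋃ m ∈ Finset.range n, g m) :=
    fun n => isClosed_biUnion_finset (fun m _ => (hgFam m).1.1)
  refine ⟨range h, ?_, ?_, ?_, ?_⟩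
  · rintro v ⟨n, rfl⟩
    exact (hgFam n).1.2.sdiff (hclosed n)
  · apply eq_univ_of_forall; intro z
    have : z ∈ ⋃₀ T := hTcov ▸ mem_univ z
    rw [hg] at this
    obtain ⟨E, ⟨n, rfl⟩, hzE⟩ := this
    have hex : ∃ n, z ∈ g n := ⟨n, hzE⟩
    refine ⟨h (Nat.find hex), ⟨Nat.find hex, rfl⟩, ?_, ?_⟩
    · exact Nat.find_spec hex
    · simp only [Finset.mem_range, mem_iUnion, not_exists]
      intro m hm
      exact Nat.find_min hex hm
  · rintro v ⟨n, rfl⟩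
    obtain ⟨u, hu, hsub⟩ := (hgFam n).2
    exact ⟨u, hu, (diff_subset).trans hsub⟩
  · intro z
    have hsub : {u ∈ range h | z ∈ u}.Subsingleton := by
      rintro v1 ⟨⟨n1, rfl⟩, hz1⟩ v2 ⟨⟨n2, rfl⟩, hz2⟩
      by_contra hne
      have hn : n1 ≠ n2 := fun e => hne (by rw [e])
      rcases hn.lt_or_gt with hlt | hlt
      · exact (by simpa using hz2.2 : ∀ m ∈ Finset.range n2, z ∉ g m) n1
          (Finset.mem_range.2 hlt) hz1.1
      · exact (by simpa using hz1.2 : ∀ m ∈ Finset.range n1, z ∉ g m) n2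
          (Finset.mem_range.2 hlt) hz2.1
    have hfin := hsub.finite
    refine ⟨hfin, ?_⟩
    have : ((0 : ℤ) + 1).toNat = 1 := rfl
    rw [this]
    exact (Set.ncard_le_one hfin).2 fun a ha b hb => hsub ha hb

lemma step_exists {Z : Type*} [MetricSpace Z] {k' : ℕ} {n : ℤ} (hk' : k' = (n + 1).toNat)
    (F : Set Z) (hFc : IsClosed F) (hFd : CovDimLE F n)
    (V : ℕ → Set Z) (hVo : ∀ j, IsOpen (V j)) (hVcov : (⋃ j, V j) = univ)
    (Ω : Set Z) (hΩo : IsOpen Ω)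
    (hord : ∀ x ∈ Ω, {j | x ∈ V j}.Finite ∧ {j | x ∈ V j}.ncard ≤ k')
    (ε : ℝ≥0∞) (hε : 0 < ε) :
    ∃ (V' : ℕ → Set Z) (Ω' : Set Z),
      (∀ j, IsOpen (V' j)) ∧ (∀ j, V' j ⊆ V j) ∧ ((⋃ j, V' j) = univ) ∧
      IsOpen Ω' ∧ Ω ⊆ Ω' ∧ F ⊆ Ω' ∧
      (∀ x ∈ Ω', {j | x ∈ V' j}.Finite ∧ {j | x ∈ V' j}.ncard ≤ k') ∧
      (∀ y : Z, ε ≤ EMetric.infEdist y (F \ Ω) → ∀ j, (y ∈ V' j ↔ y ∈ V j)) := by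
  classical
  by_cases hFΩ : F \ Ω = ∅
  · exact ⟨V, Ω, hVo, fun j => subset_rfl, hVcov, hΩo, subset_rfl,
      diff_eq_empty.1 hFΩ, hord, fun y _ j => Iff.rfl⟩
  -- Step A : trace cover on F, expansion with controlled order on F
  have hcov' : ⋃₀ (range fun j => (Subtype.val ⁻¹' V j : Set F)) = univ := by
    apply eq_univ_of_forall; rintro ⟨x, hx⟩
    have : x ∈ ⋃ j, V j := hVcov ▸ mem_univ x
    obtain ⟨j, hj⟩ := mem_iUnion.1 this
    exact ⟨_, mem_range_self j, hj⟩
  obtain ⟨d, hdo, hdcov, hdref, hdord⟩ := hFd _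
    (by rintro u ⟨j, rfl⟩; exact (hVo j).preimage continuous_subtype_val) hcov'
  rw [← hk'] at hdord
  let Jm : Set F → ℕ := fun w => if h : ∃ j, w ⊆ Subtype.val ⁻¹' V j then h.choose else 0
  have hJm : ∀ w ∈ d, w ⊆ Subtype.val ⁻¹' V (Jm w) := by
    intro w hw
    obtain ⟨u, ⟨j, rfl⟩, hsub⟩ := hdref w hw
    have h : ∃ j, w ⊆ Subtype.val ⁻¹' V j := ⟨j, hsub⟩
    simpa only [Jm, dif_pos h] using h.choose_spec
  let W : ℕ → Set Z := fun j => Subtype.val '' (⋃₀ {w ∈ d | Jm w = j})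
  have hWF : ∀ j, W j ⊆ F := by rintro j y ⟨p, _, rfl⟩; exact p.2
  have hWV : ∀ j, W j ⊆ V j := by
    rintro j y ⟨p, hp, rfl⟩
    obtain ⟨w, ⟨hwd, hwj⟩, hpw⟩ := hp
    have := hJm w hwd hpw
    rw [hwj] at this
    exact this
  have hFW : ∀ j, IsClosed (F \ W j) := by
    intro j
    have hop : IsOpen (⋃₀ {w ∈ d | Jm w = j}) := isOpen_sUnion (fun w hw => hdo w hw.1)
    obtain ⟨O, hO, hOW⟩ := isOpen_induced_iff.1 hop
    have himg : W j = F ∩ O := by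
      show Subtype.val '' (⋃₀ {w ∈ d | Jm w = j}) = F ∩ O
      rw [← hOW, Subtype.image_preimage_coe]
    rw [himg, diff_self_inter]
    exact hFc.sdiff hO
  have hWcov : ∀ y ∈ F, ∃ j, y ∈ W j := by
    intro y hy
    have : (⟨y, hy⟩ : F) ∈ ⋃₀ d := hdcov ▸ mem_univ _
    obtain ⟨w, hwd, hyw⟩ := this
    refine ⟨Jm w, ⟨y, hy⟩, ?_, rfl⟩
    exact ⟨w, ⟨hwd, rfl⟩, hyw⟩
  have hWord : ∀ (y : Z) (σ : Finset ℕ), (∀ j ∈ σ, y ∈ W j) → σ.card ≤ k' := by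
    intro y σ hσ
    rcases σ.eq_empty_or_nonempty with rfl | hσne
    · simp
    obtain ⟨j0, hj0⟩ := hσne
    have hyF : y ∈ F := hWF j0 (hσ j0 hj0)
    have hchoice : ∀ j, ∃ w : Set F, j ∈ σ →
        w ∈ d ∧ Jm w = j ∧ (⟨y, hyF⟩ : F) ∈ w := by
      intro j
      by_cases hj : j ∈ σ
      · obtain ⟨p, ⟨w, ⟨hwd, hwj⟩, hpw⟩, hpy⟩ := hσ j hj
        have hp : p = ⟨y, hyF⟩ := Subtype.ext hpy
        exact ⟨w, fun _ => ⟨hwd, hwj, hp ▸ hpw⟩⟩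
      · exact ⟨∅, fun h => absurd h hj⟩
    choose wfun hw using hchoice
    obtain ⟨hfin, hncard⟩ := hdord ⟨y, hyF⟩
    have hmaps : ∀ j ∈ σ, wfun j ∈ hfin.toFinset := by
      intro j hj
      rw [Set.Finite.mem_toFinset]
      exact ⟨(hw j hj).1, (hw j hj).2.2⟩
    have hinj : Set.InjOn wfun σ := by
      intro j1 hj1 j2 hj2 he
      have e1 := (hw j1 hj1).2.1
      have e2 := (hw j2 hj2).2.1
      rw [← e1, ← e2, he]
    have hcard := Finset.card_le_card_of_injOn wfun hmaps hinj
    rw [← Set.ncard_eq_toFinset_card _ hfin] at hcard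
    exact hcard.trans hncard
  -- Step B : metric swelling with global order control
  let D : ℕ → Set Z := fun j =>
    {x | EMetric.infEdist x (W j) < EMetric.infEdist x (F \ W j)}
  let G : ℕ → Set Z := fun j => D j ∩ V j
  have hDo : ∀ j, IsOpen (D j) :=
    fun j => isOpen_lt EMetric.continuous_infEdist EMetric.continuous_infEdist
  have hGo : ∀ j, IsOpen (G j) := fun j => (hDo j).inter (hVo j)
  have hGV : ∀ j, G j ⊆ V j := fun j => inter_subset_right
  have hFG : ∀ y ∈ F, ∃ j, y ∈ G j := by
    intro y hy
    obtain ⟨j, hyW⟩ := hWcov y hy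
    refine ⟨j, ⟨?_, hWV j hyW⟩⟩
    show EMetric.infEdist y (W j) < EMetric.infEdist y (F \ W j)
    rw [show EMetric.infEdist y (W j) = 0 from EMetric.infEdist_zero_of_mem hyW]
    rcases eq_or_ne (EMetric.infEdist y (F \ W j)) 0 with h0 | h0
    · exfalso
      have : y ∈ closure (F \ W j) := EMetric.mem_closure_iff_infEdist_zero.2 h0
      rw [(hFW j).closure_eq] at this
      exact this.2 hyW
    · exact pos_iff_ne_zero.2 h0
  have hDord : ∀ (x : Z) (σ : Finset ℕ), (∀ j ∈ σ, x ∈ D j) → σ.card ≤ k' := by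
    intro x σ hσ
    rcases σ.eq_empty_or_nonempty with rfl | hσne
    · simp
    obtain ⟨j0, hj0σ, hj0min⟩ :=
      σ.exists_min_image (fun j => EMetric.infEdist x (W j)) hσne
    have hlt : EMetric.infEdist x (W j0) <
        σ.inf' hσne (fun j => EMetric.infEdist x (F \ W j)) := by
      rw [Finset.lt_inf'_iff]
      intro j hj
      exact lt_of_le_of_lt (hj0min j hj) (hσ j hj)
    obtain ⟨y, hyW, hyd⟩ := EMetric.infEdist_lt_iff.1 hlt
    have hyσ : ∀ j ∈ σ, y ∈ W j := by
      intro j hj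
      by_contra hyn
      have hyF : y ∈ F := hWF j0 hyW
      have h1 : EMetric.infEdist x (F \ W j) ≤ edist x y :=
        EMetric.infEdist_le_edist_of_mem ⟨hyF, hyn⟩
      have h2 : σ.inf' hσne (fun j => EMetric.infEdist x (F \ W j)) ≤ edist x y :=
        le_trans (Finset.inf'_le _ hj) h1
      exact absurd hyd (not_lt.2 h2)
    exact hWord y σ hyσ
  -- Step C : the new cover
  set F' := F \ Ω with hF'
  have hF'c : IsClosed F' := hFc.sdiff hΩo
  set H : Set Z := ⋃ j, G j with hH
  have hHo : IsOpen H := isOpen_iUnion hGo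
  set Hs : Set Z := H ∩ {x | EMetric.infEdist x F' < ε} with hHs
  have hHso : IsOpen Hs :=
    hHo.inter (isOpen_lt EMetric.continuous_infEdist continuous_const)
  have hF'Hs : F' ⊆ Hs := by
    intro y hy
    refine ⟨?_, ?_⟩
    · obtain ⟨j, hj⟩ := hFG y hy.1; exact mem_iUnion.2 ⟨j, hj⟩
    · show EMetric.infEdist y F' < ε
      rw [show EMetric.infEdist y F' = 0 from EMetric.infEdist_zero_of_mem hy]; exact hε
  obtain ⟨N2, hN2o, hN2sub, hN2cl⟩ := normal_exists_closure_subset hF'c hHso hF'Hs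
  obtain ⟨N1, hN1o, hN1sub, hN1cl⟩ := normal_exists_closure_subset hF'c hN2o hN2sub
  refine ⟨fun j => (G j ∩ N2) ∪ (V j \ closure N1), Ω ∪ N1, ?_, ?_, ?_, ?_, ?_, ?_, ?_, ?_⟩
  · exact fun j => ((hGo j).inter hN2o).union ((hVo j).sdiff isClosed_closure)
  · intro j
    rintro x (⟨hx, _⟩ | ⟨hx, _⟩)
    exacts [hGV j hx, hx]
  · apply eq_univ_of_forall; intro x
    by_cases hx : x ∈ closure N1
    · have hxN2 : x ∈ N2 := hN1cl hx
      have hxH : x ∈ H := (hN2cl (subset_closure hxN2)).1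
      obtain ⟨j, hj⟩ := mem_iUnion.1 hxH
      exact mem_iUnion.2 ⟨j, Or.inl ⟨hj, hxN2⟩⟩
    · have : x ∈ ⋃ j, V j := hVcov ▸ mem_univ x
      obtain ⟨j, hj⟩ := mem_iUnion.1 this
      exact mem_iUnion.2 ⟨j, Or.inr ⟨hj, hx⟩⟩
  · exact hΩo.union hN1o
  · exact subset_union_left
  · intro y hy
    by_cases hyΩ : y ∈ Ω
    · exact Or.inl hyΩ
    · exact Or.inr (hN1sub ⟨hy, hyΩ⟩)
  · intro x hx
    by_cases hx1 : x ∈ closure N1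
    · have hsub : {j | x ∈ (G j ∩ N2) ∪ (V j \ closure N1)} ⊆ {j | x ∈ D j} := by
        intro j hj
        rcases hj with ⟨hG, _⟩ | ⟨_, hc⟩
        · exact hG.1
        · exact absurd hx1 hc
      obtain ⟨hfin, hcard⟩ := finite_ncard_le_of_forall_finset
        (S := {j | x ∈ D j}) (m := k') (fun σ hσ => hDord x σ hσ)
      exact ⟨hfin.subset hsub, le_trans (Set.ncard_le_ncard hsub hfin) hcard⟩
    · have hxΩ : x ∈ Ω := by
        rcases hx with h | h
        · exact h
        · exact absurd (subset_closure h) hx1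
      have hsub : {j | x ∈ (G j ∩ N2) ∪ (V j \ closure N1)} ⊆ {j | x ∈ V j} := by
        intro j hj
        rcases hj with ⟨hG, _⟩ | ⟨hV, _⟩
        · exact hGV j hG
        · exact hV
      obtain ⟨hfin, hcard⟩ := hord x hxΩ
      exact ⟨hfin.subset hsub, le_trans (Set.ncard_le_ncard hsub hfin) hcard⟩
  · intro y hy j
    have hyN2 : y ∉ closure N2 := by
      intro hyc
      have := (hN2cl hyc).2
      exact absurd hy (not_le.2 this)
    have hyN2' : y ∉ N2 := fun h => hyN2 (subset_closure h)
    have hyN1 : y ∉ closure N1 := fun h => hyN2' (hN1cl h)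
    constructor
    · rintro (⟨_, h⟩ | ⟨h, _⟩)
      · exact absurd h hyN2'
      · exact h
    · intro h
      exact Or.inr ⟨h, hyN1⟩

lemma covDimLE_sum {Z : Type*} [MetricSpace Z] [SecondCountableTopology Z] (n : ℤ)
    (F : ℕ → Set Z) (hFc : ∀ i, IsClosed (F i)) (hFd : ∀ i, CovDimLE (F i) n)
    (hFU : (⋃ i, F i) = univ) : CovDimLE Z n := by
  classical
  rcases isEmpty_or_nonempty Z with hZ | hZ
  · exact covDimLE_of_isEmpty n
  set k' : ℕ := (n + 1).toNat with hk'
  intro c hc hcov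
  obtain ⟨c', hc'c, hc'sub, hc'cov⟩ := TopologicalSpace.isOpen_sUnion_countable c hc
  rw [hcov] at hc'cov
  have hc'ne : c'.Nonempty := by
    rcases hZ with ⟨z⟩
    have : z ∈ ⋃₀ c' := hc'cov ▸ mem_univ z
    obtain ⟨u, hu, _⟩ := this
    exact ⟨u, hu⟩
  obtain ⟨U, hU⟩ := hc'c.exists_eq_range hc'ne
  have hUc : ∀ j, U j ∈ c := fun j => hc'sub (hU ▸ mem_range_self j)
  have hUopen : ∀ j, IsOpen (U j) := fun j => hc (U j) (hUc j)
  have hUcov : (⋃ j, U j) = univ := by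
    rw [← sUnion_range, ← hU]
    exact hc'cov
  -- the epsilons
  set ε : ℕ → ℝ≥0∞ := fun i => (↑(i + 1) : ℝ≥0∞)⁻¹ with hε
  have hεpos : ∀ i, 0 < ε i := by
    intro i
    simp only [hε]
    rw [ENNReal.inv_pos]
    exact ENNReal.natCast_ne_top (i + 1)
  have hεsmall : ∀ b : ℝ≥0∞, b ≠ 0 → ∃ L : ℕ, ∀ l, L ≤ l → ε l ≤ b := by
    intro b hb
    obtain ⟨L, hL⟩ := ENNReal.exists_nat_gt (ENNReal.inv_ne_top.2 hb)
    refine ⟨L, fun l hl => ?_⟩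
    have h1 : b⁻¹ ≤ (↑(l + 1) : ℝ≥0∞) := by
      calc b⁻¹ ≤ (L : ℝ≥0∞) := hL.le
      _ ≤ (↑(l + 1) : ℝ≥0∞) := by exact_mod_cast Nat.le_succ_of_le hl
    simpa only [hε] using ENNReal.inv_le_iff_inv_le.1 (by simpa using h1)
  -- the stage invariants
  set Inv : ℕ → ((ℕ → Set Z) × Set Z) → Prop := fun i s =>
    (∀ j, IsOpen (s.1 j)) ∧ (∀ j, s.1 j ⊆ U j) ∧ (⋃ j, s.1 j) = univ ∧
    IsOpen s.2 ∧ (∀ m, m < i → F m ⊆ s.2) ∧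
    ∀ x ∈ s.2, {j | x ∈ s.1 j}.Finite ∧ {j | x ∈ s.1 j}.ncard ≤ k' with hInvDef
  set Rel : ℕ → ((ℕ → Set Z) × Set Z) → ((ℕ → Set Z) × Set Z) → Prop := fun i s s' =>
    (∀ j, s'.1 j ⊆ s.1 j) ∧ (s.2 ⊆ s'.2) ∧
    ∀ y : Z, ε i ≤ EMetric.infEdist y (F i \ s.2) → ∀ j, (y ∈ s'.1 j ↔ y ∈ s.1 j)
    with hRelDef
  have hstep : ∀ i s, Inv i s → ∃ s', Inv (i + 1) s' ∧ Rel i s s' := by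
    rintro i ⟨V, Ω⟩ ⟨h1, h2, h3, h4, h5, h6⟩
    obtain ⟨V', Ω', g1, g2, g3, g4, g5, g6, g7, g8⟩ :=
      step_exists hk' (F i) (hFc i) (hFd i) V h1 h3 Ω h4 h6 (ε i) (hεpos i)
    refine ⟨(V', Ω'), ⟨g1, fun j => (g2 j).trans (h2 j), g3, g4, ?_, g7⟩, g2, g5, g8⟩
    intro m hm
    rcases Nat.lt_succ_iff_lt_or_eq.1 hm with hm' | rfl
    · exact (h5 m hm').trans g5
    · exact g6
  have hInv0 : Inv 0 (U, ∅) := by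
    refine ⟨hUopen, fun j => subset_rfl, hUcov, isOpen_empty, fun m hm => absurd hm (Nat.not_lt_zero m), ?_⟩
    intro x hx
    exact absurd hx (notMem_empty x)
  obtain ⟨g, hg0, hgInv, hgRel⟩ := nat_rec_choice Inv Rel (U, ∅) hInv0 hstep
  set V : ℕ → ℕ → Set Z := fun i => (g i).1 with hV
  set Ωs : ℕ → Set Z := fun i => (g i).2 with hΩs
  have hVopen : ∀ i j, IsOpen (V i j) := fun i j => (hgInv i).1 j
  have hVU : ∀ i j, V i j ⊆ U j := fun i j => (hgInv i).2.1 j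
  have hVcov : ∀ i, (⋃ j, V i j) = univ := fun i => (hgInv i).2.2.1
  have hΩopen : ∀ i, IsOpen (Ωs i) := fun i => (hgInv i).2.2.2.1
  have hΩF : ∀ i m, m < i → F m ⊆ Ωs i := fun i => (hgInv i).2.2.2.2.1
  have hΩord : ∀ i, ∀ x ∈ Ωs i, {j | x ∈ V i j}.Finite ∧ {j | x ∈ V i j}.ncard ≤ k' :=
    fun i => (hgInv i).2.2.2.2.2
  have hVmono : ∀ i l, i ≤ l → ∀ j, V l j ⊆ V i j := by
    intro i l hil
    induction hil with
    | refl => exact fun j => subset_rfl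
    | step h ih => exact fun j => ((hgRel _).1 j).trans (ih j)
  have hΩmono : ∀ i l, i ≤ l → Ωs i ⊆ Ωs l := by
    intro i l hil
    induction hil with
    | refl => exact subset_rfl
    | step h ih => exact ih.trans (hgRel _).2.1
  -- key stabilization
  have hkey : ∀ x : Z, ∃ (L : ℕ) (ρ : ℝ≥0∞), 0 < ρ ∧ x ∈ Ωs L ∧
      ∀ y : Z, edist x y < ρ → ∀ l, L ≤ l → ∀ j, (y ∈ V (l + 1) j ↔ y ∈ V l j) := by
    intro x
    have : x ∈ ⋃ i, F i := hFU ▸ mem_univ x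
    obtain ⟨i0, hi0⟩ := mem_iUnion.1 this
    have hxΩ : x ∈ Ωs (i0 + 1) := hΩF (i0 + 1) i0 (Nat.lt_succ_self i0) hi0
    set Q : Set Z := (Ωs (i0 + 1))ᶜ with hQ
    have hQc : IsClosed Q := (hΩopen (i0 + 1)).isClosed_compl
    set δ : ℝ≥0∞ := EMetric.infEdist x Q with hδdef
    have hδ : δ ≠ 0 := by
      intro h0
      have : x ∈ closure Q := EMetric.mem_closure_iff_infEdist_zero.2 h0
      rw [hQc.closure_eq] at this
      exact this hxΩ
    set ρ : ℝ≥0∞ := min 1 (δ / 2) with hρdef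
    have hρpos : 0 < ρ := lt_min zero_lt_one (ENNReal.half_pos hδ)
    obtain ⟨L0, hL0⟩ := hεsmall (δ / 2) (ENNReal.half_pos hδ).ne'
    refine ⟨max L0 (i0 + 1), ρ, hρpos, hΩmono (i0 + 1) _ (le_max_right _ _) hxΩ, ?_⟩
    intro y hy l hl j
    apply (hgRel l).2.2
    by_contra hcon
    have hlt : EMetric.infEdist y (F l \ Ωs l) < ε l := not_le.1 hcon
    have hsubQ : F l \ Ωs l ⊆ Q := by
      intro z hz
      intro hzΩ
      exact hz.2 (hΩmono (i0 + 1) l (le_trans (le_max_right _ _) hl) hzΩ)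
    have h1 : EMetric.infEdist y Q < ε l := lt_of_le_of_lt (EMetric.infEdist_anti hsubQ) hlt
    have h2 : δ ≤ EMetric.infEdist y Q + edist x y := EMetric.infEdist_le_infEdist_add_edist
    have h3 : δ < ε l + ρ := lt_of_le_of_lt h2 (ENNReal.add_lt_add h1 hy)
    have h4 : ε l + ρ ≤ δ := by
      rcases eq_or_ne δ ⊤ with htop | htop
      · rw [htop]
        exact le_top
      · have e1 : ε l ≤ δ / 2 := hL0 l (le_trans (le_max_left _ _) hl)
        have e2 : ρ ≤ δ / 2 := min_le_right _ _
        calc ε l + ρ ≤ δ / 2 + δ / 2 := add_le_add e1 e2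
          _ = δ := ENNReal.add_halves δ
    exact absurd h3 (not_lt.2 h4)
  set Vf : ℕ → Set Z := fun j => ⋂ i, V i j with hVf
  have hup : ∀ (y : Z) (L : ℕ),
      (∀ l, L ≤ l → ∀ j, (y ∈ V (l + 1) j ↔ y ∈ V l j)) →
      ∀ j, y ∈ V L j → y ∈ Vf j := by
    intro y L hstab j hyL
    have hall : ∀ l, L ≤ l → y ∈ V l j := by
      intro l hl
      induction hl with
      | refl => exact hyL
      | step h ih => exact (hstab _ h j).2 ih
    apply mem_iInter.2
    intro i
    rcases le_or_gt L i with h | h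
    · exact hall i h
    · exact hVmono i L h.le j hyL
  have hVfopen : ∀ j, IsOpen (Vf j) := by
    intro j
    rw [EMetric.isOpen_iff]
    intro x hx
    obtain ⟨L, ρ, hρpos, _, hstab⟩ := hkey x
    have hxL : x ∈ V L j := mem_iInter.1 hx L
    obtain ⟨ρ', hρ'pos, hρ'sub⟩ := EMetric.isOpen_iff.1 (hVopen L j) x hxL
    refine ⟨min ρ ρ', lt_min hρpos hρ'pos, ?_⟩
    intro y hy
    rw [EMetric.mem_ball] at hy
    have hy1 : edist x y < ρ := by
      rw [edist_comm]
      exact lt_of_lt_of_le hy (min_le_left _ _)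
    have hy2 : y ∈ V L j := hρ'sub (EMetric.mem_ball.2 (lt_of_lt_of_le hy (min_le_right _ _)))
    exact hup y L (fun l hl j' => hstab y hy1 l hl j') j hy2
  have hVfcov : ∀ x : Z, ∃ j, x ∈ Vf j := by
    intro x
    obtain ⟨L, ρ, hρpos, _, hstab⟩ := hkey x
    have : x ∈ ⋃ j, V L j := hVcov L ▸ mem_univ x
    obtain ⟨j, hj⟩ := mem_iUnion.1 this
    have hs : edist x x < ρ := by rw [edist_self]; exact hρpos
    exact ⟨j, hup x L (fun l hl j' => hstab x hs l hl j') j hj⟩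
  have hVford : ∀ x : Z, {j | x ∈ Vf j}.Finite ∧ {j | x ∈ Vf j}.ncard ≤ k' := by
    intro x
    obtain ⟨L, _, _, hxΩ, _⟩ := hkey x
    have hsub : {j | x ∈ Vf j} ⊆ {j | x ∈ V L j} := by
      intro j hj
      exact mem_iInter.1 hj L
    obtain ⟨hfin, hcard⟩ := hΩord L x hxΩ
    exact ⟨hfin.subset hsub, le_trans (Set.ncard_le_ncard hsub hfin) hcard⟩
  refine ⟨range Vf, ?_, ?_, ?_, ?_⟩
  · rintro v ⟨j, rfl⟩
    exact hVfopen j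
  · apply eq_univ_of_forall; intro x
    obtain ⟨j, hj⟩ := hVfcov x
    exact ⟨Vf j, mem_range_self j, hj⟩
  · rintro v ⟨j, rfl⟩
    exact ⟨U j, hUc j, (iInter_subset _ 0).trans (hVU 0 j)⟩
  · intro x
    obtain ⟨hfin, hcard⟩ := hVford x
    have key : {u ∈ range Vf | x ∈ u} = Vf '' {j | x ∈ Vf j} := by
      ext u
      constructor
      · rintro ⟨⟨j, rfl⟩, hx⟩
        exact ⟨j, hx, rfl⟩
      · rintro ⟨j, hj, rfl⟩
        exact ⟨mem_range_self j, hj⟩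
    rw [key, ← hk']
    exact ⟨hfin.image _, le_trans (Set.ncard_image_le hfin) hcard⟩

/-- Lemma 1. -/
theorem stmt1 {X Y : Type*} [MetricSpace X] [CompactSpace X] [MetricSpace Y] [CompactSpace Y]
    (f : X → Y) (hf : Continuous f) (k : ℕ)
    (hsep : ∀ B C : Set X, IsClosed B → IsClosed C → Disjoint B C →
      ∃ T : Set X, IsClosed T ∧ Paper.DimLE T ((k : ℤ) - 1) ∧
        ∀ y : Y, Paper.Separates (f ⁻¹' {y}) T B C) :
    ∃ A : Set X, Paper.IsSigmaCompact' A ∧ Paper.DimLE A ((k : ℤ) - 1) ∧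
      ∀ y : Y, Paper.DimLE (f ⁻¹' {y} \ A) 0 := by
  classical
  rcases isEmpty_or_nonempty X with hX | hX
  · refine ⟨∅, ⟨fun _ => ∅, fun _ => isCompact_empty, by simp⟩, ?_, ?_⟩
    · have : IsEmpty (↥(∅ : Set X)) := ⟨fun z => hX.false z.1⟩
      exact covDimLE_of_isEmpty _
    · intro y
      have : IsEmpty (↥(f ⁻¹' {y} \ (∅ : Set X))) := ⟨fun z => hX.false z.1⟩
      exact covDimLE_of_isEmpty _
  obtain ⟨u, hu⟩ := TopologicalSpace.exists_dense_seq X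
  set r : ℕ → ℝ := fun m => (1 / 2 : ℝ) ^ m with hr
  have hrpos : ∀ m, 0 < r m := fun m => by positivity
  have hrlt : ∀ m, r (m + 1) < r m := by
    intro m
    rw [hr]
    simp only [pow_succ]
    nlinarith [hrpos m]
  have hpair : ∀ a m : ℕ, ∃ T : Set X, IsClosed T ∧ Paper.DimLE T ((k : ℤ) - 1) ∧
      ∀ y, Paper.Separates (f ⁻¹' {y}) T (Metric.closedBall (u a) (r (m + 1)))
        ((Metric.ball (u a) (r m))ᶜ) := by
    intro a m
    apply hsep
    · exact Metric.isClosed_closedBall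
    · exact Metric.isOpen_ball.isClosed_compl
    · rw [Set.disjoint_left]
      intro b hb hbc
      apply hbc
      rw [Metric.mem_ball]
      exact lt_of_le_of_lt (Metric.mem_closedBall.1 hb) (hrlt m)
  choose T hTc hTd hTsep using hpair
  set e : ℕ ≃ ℕ × ℕ := (Denumerable.eqv (ℕ × ℕ)).symm with he
  set A : Set X := ⋃ p : ℕ, T (e p).1 (e p).2 with hA
  have hTA : ∀ a m, T a m ⊆ A := by
    intro a m x hx
    apply mem_iUnion.2
    refine ⟨e.symm (a, m), ?_⟩
    rw [Equiv.apply_symm_apply]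
    exact hx
  refine ⟨A, ⟨fun p => T (e p).1 (e p).2, fun p => (hTc _ _).isCompact, rfl⟩, ?_, ?_⟩
  · -- dim A ≤ k - 1 by the countable closed sum theorem
    apply covDimLE_sum ((k : ℤ) - 1)
      (fun p => (Subtype.val ⁻¹' (T (e p).1 (e p).2) : Set A))
    · exact fun p => (hTc _ _).preimage continuous_subtype_val
    · intro p
      exact covDimLE_congr (subsubHomeo (hTA (e p).1 (e p).2)).symm (hTd _ _)
    · apply eq_univ_of_forall
      rintro ⟨x, hx⟩
      obtain ⟨p, hp⟩ := mem_iUnion.1 hx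
      exact mem_iUnion.2 ⟨p, hp⟩
  · -- fibers of the restriction are zero-dimensional
    intro y
    apply covDimLE_zero_of_clopen_basis
    rintro ⟨x, hxf, hxA⟩ O hO hzO
    obtain ⟨O', hO'o, hO'pre⟩ := isOpen_induced_iff.1 hO
    have hxO' : x ∈ O' := by
      rw [← hO'pre] at hzO
      exact hzO
    obtain ⟨ρ, hρpos, hρsub⟩ := Metric.isOpen_iff.1 hO'o x hxO'
    obtain ⟨m, hm⟩ := exists_pow_lt_of_lt_one (half_pos hρpos) (by norm_num : (1 / 2 : ℝ) < 1)
    obtain ⟨a, ha⟩ := Metric.denseRange_iff.1 hu x (r (m + 1)) (hrpos (m + 1))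
    obtain ⟨U, V, hUo, hVo, hUV, hdisj, hBU, hCV⟩ := hTsep a m y
    have hxT : x ∉ T a m := fun h => hxA (hTA a m h)
    have hxB : x ∈ Metric.closedBall (u a) (r (m + 1)) := by
      rw [Metric.mem_closedBall]
      exact ha.le
    have hxU : x ∈ U ∩ (f ⁻¹' {y} \ T a m) := hBU ⟨hxf, hxB⟩
    refine ⟨Subtype.val ⁻¹' U, ⟨?_, hUo.preimage continuous_subtype_val⟩, hxU.1, ?_⟩
    · -- closedness : val ⁻¹' U = (val ⁻¹' V)ᶜ
      have hEq : (Subtype.val ⁻¹' U : Set ↥(f ⁻¹' {y} \ A)) = (Subtype.val ⁻¹' V)ᶜ := by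
        ext ⟨w, hwf, hwA⟩
        have hwT : (w : X) ∉ T a m := fun h => hwA (hTA a m h)
        constructor
        · intro hwU hwV
          have h1 : w ∈ U ∩ (f ⁻¹' {y} \ T a m) := ⟨hwU, hwf, hwT⟩
          have h2 : w ∈ V ∩ (f ⁻¹' {y} \ T a m) := ⟨hwV, hwf, hwT⟩
          exact Set.disjoint_left.1 hdisj h1 h2
        · intro hwV
          rcases hUV ⟨hwf, hwT⟩ with h | h
          · exact h
          · exact absurd h hwV
      rw [hEq]
      exact (hVo.preimage continuous_subtype_val).isClosed_compl
    · -- smallness : val ⁻¹' U ⊆ O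
      rintro ⟨w, hwf, hwA⟩ hwU
      have hwT : (w : X) ∉ T a m := fun h => hwA (hTA a m h)
      have hwball : w ∈ Metric.ball (u a) (r m) := by
        by_contra hwb
        have h2 : w ∈ V ∩ (f ⁻¹' {y} \ T a m) := hCV ⟨hwf, hwb⟩
        have h1 : w ∈ U ∩ (f ⁻¹' {y} \ T a m) := ⟨hwU, hwf, hwT⟩
        exact Set.disjoint_left.1 hdisj h1 h2
      have hdist : dist w x < ρ := by
        have d1 : dist w (u a) < r m := Metric.mem_ball.1 hwball
        have d2 : dist (u a) x < r (m + 1) := by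
          rw [dist_comm]
          exact ha
        have : dist w x < r m + r (m + 1) := lt_of_le_of_lt (dist_triangle w (u a) x)
          (add_lt_add d1 d2)
        have hrm : r m + r (m + 1) < ρ := by
          have := hrlt m
          have h2 : r m < ρ / 2 := hm
          nlinarith
        linarith
      have : (w : X) ∈ O' := hρsub (Metric.mem_ball.2 hdist)
      rw [← hO'pre]
      exact this
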